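/- Every complex Banach space (E, ‖·‖) that is strictly convex as a real Banach space is strictly plurisubharmonic: every holomorphic map γ : D̄ → E whose image lies in the unit sphere is constant. -/

import Mathlib

open MeasureTheory Metric Set

/-- `γ` is holomorphic on a neighbourhood of the closed unit disc. -/
def HolOnDisc {E : Type*} [NormedAddCommGroup E] [NormedSpace ℂ E] (γ : ℂ → E) : Prop :=
  ∃ U : Set ℂ, IsOpen U ∧ closedBall (0 : ℂ) 1 ⊆ U ∧ DifferentiableOn ℂ γ U

/-- A real-valued function is plurisubharmonic on `X` if it satisfies the sub-mean-value
inequality along every holomorphic map from the closed unit disc into `X`. -/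
def PSHROn {E : Type*} [NormedAddCommGroup E] [NormedSpace ℂ E]
    (f : E → ℝ) (X : Set E) : Prop :=
  ∀ γ : ℂ → E, HolOnDisc γ → (∀ z ∈ closedBall (0 : ℂ) 1, γ z ∈ X) →
    f (γ 0) ≤ (2 * Real.pi)⁻¹ *
      ∫ t in (0 : ℝ)..(2 * Real.pi), f (γ (Complex.exp (t * Complex.I)))

/-- A real-valued function is strictly plurisubharmonic on `X` if moreover the
sub-mean-value inequality is strict along every non-constant such map. -/
def StrictPSHROn {E : Type*} [NormedAddCommGroup E] [NormedSpace ℂ E]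
    (f : E → ℝ) (X : Set E) : Prop :=
  PSHROn f X ∧
  ∀ γ : ℂ → E, HolOnDisc γ → (∀ z ∈ closedBall (0 : ℂ) 1, γ z ∈ X) →
    ¬ Set.EqOn γ (fun _ => γ 0) (closedBall (0 : ℂ) 1) →
    f (γ 0) < (2 * Real.pi)⁻¹ *
      ∫ t in (0 : ℝ)..(2 * Real.pi), f (γ (Complex.exp (t * Complex.I)))

/-- A complex Banach space that is strictly convex as a real Banach space (every affine
map `[-1,1] → E` with image in the unit sphere is constant) is strictly
plurisubharmonic: every holomorphic map from the closed unit disc with image in the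
unit sphere is constant. -/
theorem strictly_convex_implies_strictly_psh {E : Type*} [NormedAddCommGroup E]
    [NormedSpace ℂ E] [CompleteSpace E]
    (hconv : ∀ v w : E, (∀ t ∈ Icc (-1 : ℝ) 1, ‖v + t • w‖ = 1) → w = 0) :
    ∀ γ : ℂ → E, HolOnDisc γ → (∀ z ∈ closedBall (0 : ℂ) 1, ‖γ z‖ = 1) →
      Set.EqOn γ (fun _ => γ 0) (closedBall (0 : ℂ) 1) := by
  rintro γ ⟨U, hUo, hUsub, hγ⟩ hsph z hz
  have h0mem : (0 : ℂ) ∈ closedBall (0 : ℂ) 1 := by simp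
  have h0 : ‖γ 0‖ = 1 := hsph 0 h0mem
  have hne : γ 0 ≠ 0 := by
    intro h; rw [h, norm_zero] at h0; norm_num at h0
  obtain ⟨φ, hφ1, hφ0⟩ := exists_dual_vector ℂ (γ 0) (norm_ne_zero_iff.mpr hne)
  have hφ0' : φ (γ 0) = 1 := by rw [hφ0, h0]; norm_num
  -- h := φ ∘ γ
  have hγdiff : DifferentiableOn ℂ (fun w => φ (γ w)) U :=
    φ.differentiable.comp_differentiableOn hγ
  have hball : ball (0 : ℂ) 1 ⊆ U := ball_subset_closedBall.trans hUsub
  have hdcc : DiffContOnCl ℂ (fun w => φ (γ w)) (ball (0 : ℂ) 1) := by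
    refine ⟨hγdiff.mono hball, (hγdiff.continuousOn.mono ?_)⟩
    rw [closure_ball (0 : ℂ) one_ne_zero]
    exact hUsub
  have hbound : ∀ w ∈ closedBall (0 : ℂ) 1, ‖φ (γ w)‖ ≤ 1 := by
    intro w hw
    calc ‖φ (γ w)‖ ≤ ‖φ‖ * ‖γ w‖ := φ.le_opNorm _
    _ = 1 := by rw [hφ1, hsph w hw]; ring
  have hmax : IsMaxOn (norm ∘ fun w => φ (γ w)) (ball (0 : ℂ) 1) 0 := by
    intro w hw
    simp only [Function.comp_apply, hφ0', norm_one]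
    exact hbound w (ball_subset_closedBall hw)
  have heq := Complex.eqOn_closedBall_of_isMaxOn_norm hdcc hmax hz
  have hz1 : φ (γ z) = 1 := by simpa [hφ0'] using heq
  -- strict convexity argument
  have key : γ z - γ 0 = 0 := by
    have := hconv ((2:ℝ)⁻¹ • (γ z + γ 0)) ((2:ℝ)⁻¹ • (γ z - γ 0)) ?_
    · have h2 : ((2:ℝ)⁻¹ : ℝ) ≠ 0 := by norm_num
      exact (smul_eq_zero.mp this).resolve_left h2
    intro t ht
    obtain ⟨ht1, ht2⟩ := ht
    have hrw : (2:ℝ)⁻¹ • (γ z + γ 0) + t • ((2:ℝ)⁻¹ • (γ z - γ 0))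
        = ((1 + t)/2) • γ z + ((1 - t)/2) • γ 0 := by
      module
    rw [hrw]
    have ha : (0:ℝ) ≤ (1 + t)/2 := by linarith
    have hb : (0:ℝ) ≤ (1 - t)/2 := by linarith
    apply le_antisymm
    · calc ‖((1 + t)/2) • γ z + ((1 - t)/2) • γ 0‖
          ≤ ‖((1 + t)/2) • γ z‖ + ‖((1 - t)/2) • γ 0‖ := norm_add_le _ _
      _ = (1 + t)/2 * ‖γ z‖ + (1 - t)/2 * ‖γ 0‖ := by
          rw [norm_smul, norm_smul, Real.norm_of_nonneg ha, Real.norm_of_nonneg hb]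
      _ = 1 := by rw [hsph z hz, h0]; ring
    · have hval : φ (((1 + t)/2) • γ z + ((1 - t)/2) • γ 0) = 1 := by
        rw [map_add, φ.map_smul_of_tower, φ.map_smul_of_tower, hz1, hφ0']
        simp; ring
      calc (1:ℝ) = ‖φ (((1 + t)/2) • γ z + ((1 - t)/2) • γ 0)‖ := by
            rw [hval, norm_one]
      _ ≤ ‖φ‖ * ‖((1 + t)/2) • γ z + ((1 - t)/2) • γ 0‖ := φ.le_opNorm _
      _ = ‖((1 + t)/2) • γ z + ((1 - t)/2) • γ 0‖ := by rw [hφ1, one_mul]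
  have : γ z = γ 0 := by
    have := sub_eq_zero.mp key
    exact this
  simpa using this
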